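/- arXiv:1210.4180 — 5 statements merged into one kernel-verified Lean document; each statement's English description precedes it below -/
import Mathlib

section
/- Suppose real numbers ν₀, ν₁, ν₂, ν₂ᶜ, ν₃, ε₀, ε₁, ε₂, ε₂ᶜ, ε₃ satisfy: ε₀ = (3/2)ν₀, ε₁ ≤ (3/2)ν₁, ε₂ - ε₂ᶜ = 2(ν₂ - ν₂ᶜ), ε₂ᶜ = (5/2)ν₂ᶜ, ε₃ ≤ 2ν₃, all νᵢ are nonnegative, 0 ≤ ν₂ᶜ ≤ ν₂, and furthermore n = ν₀ + ν₁ + ν₂ + ν₃ > 0 and m = ε₀ + ε₁ + ε₂ + ε₃. If m/n ≥ (4 + δ)/2 for some δ > 0, then ν₂ᶜ ≥ δ·n. -/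
theorem stmt_2 (ν₀ ν₁ ν₂ ν₂c ν₃ ε₀ ε₁ ε₂ ε₂c ε₃ n m δ : ℝ)
    (h0 : ε₀ = (3/2) * ν₀) (h1 : ε₁ ≤ (3/2) * ν₁)
    (h2 : ε₂ - ε₂c = 2 * (ν₂ - ν₂c)) (h2c : ε₂c = (5/2) * ν₂c)
    (h3 : ε₃ ≤ 2 * ν₃)
    (hν₀ : 0 ≤ ν₀) (hν₁ : 0 ≤ ν₁) (hν₂ : 0 ≤ ν₂) (hν₃ : 0 ≤ ν₃)
    (hν₂c : 0 ≤ ν₂c) (hν₂c' : ν₂c ≤ ν₂)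
    (hn : n = ν₀ + ν₁ + ν₂ + ν₃) (hnpos : 0 < n)
    (hm : m = ε₀ + ε₁ + ε₂ + ε₃)
    (hδ : 0 < δ) (hdens : (4 + δ) / 2 ≤ m / n) :
    δ * n ≤ ν₂c := by
  rw [div_le_div_iff₀ two_pos hnpos] at hdens
  nlinarith [hdens]
end

section
/- Let G be a 3-connected graph and let G' be obtained from G by a conservative-quadratic extension: choose distinct vertices u, v of G with u and v non-adjacent, and vertices x ≠ u, y ≠ v with {u,v} ≠ {x,y}; add two new adjacent vertices u', v' where u' is adjacent to u and x, and v' is adjacent to v and y. Then G' is 3-connected. -/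
open SimpleGraph Sum

def ThreeConnected {V : Type*} [Fintype V] (G : SimpleGraph V) : Prop :=
  4 ≤ Fintype.card V ∧ ∀ S : Set V, S.ncard ≤ 2 → (G.induce Sᶜ).Connected

def Bicritical {V : Type*} (G : SimpleGraph V) : Prop :=
  ∀ a b : V, a ≠ b →
    ∃ M : (G.induce ({a, b}ᶜ : Set V)).Subgraph, M.IsPerfectMatching

def consQuadExt {V : Type*} (G : SimpleGraph V) (u v x y : V) :
    SimpleGraph (V ⊕ Bool) :=
  SimpleGraph.fromEdgeSet
    ((Sym2.map inl '' G.edgeSet) ∪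
      {s(inr false, inr true), s(inr false, inl u), s(inr false, inl x),
       s(inr true, inl v), s(inr true, inl y)})

theorem stmt_4 {V : Type*} [Fintype V] (G : SimpleGraph V) (u v x y : V)
    (h3 : ThreeConnected G) (huv : u ≠ v) (hadj : ¬ G.Adj u v)
    (hx : x ≠ u) (hy : y ≠ v) (hne : ({u, v} : Set V) ≠ {x, y}) :
    ThreeConnected (consQuadExt G u v x y) := by
  classical
  obtain ⟨hcard, hconn⟩ := h3
  set G' := consQuadExt G u v x y with hG'
  have hAdj : ∀ a b : V, G.Adj a b → G'.Adj (inl a) (inl b) := by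
    intro a b hab
    rw [hG', consQuadExt, fromEdgeSet_adj]
    refine ⟨Or.inl ⟨s(a,b), hab, by simp⟩, by simp [hab.ne]⟩
  have hE1 : G'.Adj (inr false) (inr true) := by
    rw [hG', consQuadExt, fromEdgeSet_adj]; simp
  have hE2 : G'.Adj (inr false) (inl u) := by
    rw [hG', consQuadExt, fromEdgeSet_adj]; simp
  have hE3 : G'.Adj (inr false) (inl x) := by
    rw [hG', consQuadExt, fromEdgeSet_adj]; simp
  have hE4 : G'.Adj (inr true) (inl v) := by
    rw [hG', consQuadExt, fromEdgeSet_adj]; simp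
  have hE5 : G'.Adj (inr true) (inl y) := by
    rw [hG', consQuadExt, fromEdgeSet_adj]; simp
  constructor
  · simp only [Fintype.card_sum, Fintype.card_bool]; omega
  intro S hS
  set T : Set V := inl ⁻¹' S with hTdef
  have hSfin : S.Finite := S.toFinite
  have hTS : T.ncard ≤ S.ncard := by
    calc T.ncard = (inl '' T : Set (V ⊕ Bool)).ncard :=
          (Set.ncard_image_of_injective _ inl_injective).symm
      _ ≤ S.ncard := Set.ncard_le_ncard (by rintro w ⟨a, ha, rfl⟩; exact ha) hSfin
  have hT2 : T.ncard ≤ 2 := hTS.trans hS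
  have hGT : (G.induce Tᶜ).Connected := hconn T hT2
  have hmemT : ∀ a : V, a ∉ T → inl a ∈ Sᶜ := fun a ha => ha
  -- hom from induced G to induced G'
  let φ : (G.induce Tᶜ) →g (G'.induce Sᶜ) :=
    ⟨fun a => ⟨inl a.1, a.2⟩, fun hab => hAdj _ _ hab⟩
  have key : ∀ (a b : V) (ha : a ∉ T) (hb : b ∉ T),
      (G'.induce Sᶜ).Reachable ⟨inl a, ha⟩ ⟨inl b, hb⟩ := by
    intro a b ha hb
    exact (hGT.preconnected ⟨a, ha⟩ ⟨b, hb⟩).map φ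
  have step : ∀ (w1 w2 : V ⊕ Bool) (h1 : w1 ∈ Sᶜ) (h2 : w2 ∈ Sᶜ), G'.Adj w1 w2 →
      (G'.induce Sᶜ).Reachable ⟨w1, h1⟩ ⟨w2, h2⟩ := by
    intro w1 w2 h1 h2 h
    exact SimpleGraph.Adj.reachable h
  -- not all four of u x v y in T
  have hnotall : ¬ (u ∈ T ∧ x ∈ T ∧ v ∈ T ∧ y ∈ T) := by
    rintro ⟨hu, hxT, hv, hyT⟩
    have hsub : ({u, v} : Set V) ⊆ T := by
      rintro a (rfl | rfl) <;> assumption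
    have hpair : ({u, v} : Set V).ncard = 2 := Set.ncard_pair huv
    have hTeq : ({u, v} : Set V) = T :=
      Set.eq_of_subset_of_ncard_le hsub (by omega) T.toFinite
    have hxmem : x ∈ ({u, v} : Set V) := hTeq ▸ hxT
    have hymem : y ∈ ({u, v} : Set V) := hTeq ▸ hyT
    have hxv : x = v := by rcases hxmem with h | h; exact absurd h hx; exact h
    have hyu : y = u := by rcases hymem with h | h; exact h; exact absurd h hy
    exact hne (by rw [hxv, hyu, Set.pair_comm])
  -- anchor
  have anchor : ∀ (w : V ⊕ Bool) (hw : w ∈ Sᶜ), ∃ (a : V) (ha : a ∉ T),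
      (G'.induce Sᶜ).Reachable ⟨w, hw⟩ ⟨inl a, ha⟩ := by
    intro w hw
    match w with
    | inl a => exact ⟨a, hw, Reachable.refl _⟩
    | inr b =>
      have small : ∀ c : Bool, inr c ∈ S → T.ncard ≤ 1 := by
        intro c hc
        have h1 : (inl '' T : Set (V ⊕ Bool)) ⊆ S \ {inr c} := by
          rintro w ⟨a, ha, rfl⟩; exact ⟨ha, by simp⟩
        have h2 : (S \ {inr c}).ncard < S.ncard :=
          Set.ncard_diff_singleton_lt_of_mem hc hSfin
        have h3 : T.ncard = (inl '' T : Set (V ⊕ Bool)).ncard :=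
          (Set.ncard_image_of_injective _ inl_injective).symm
        have h4 := Set.ncard_le_ncard h1 hSfin.diff
        omega
      match b with
      | false =>
        by_cases hu : u ∈ T
        · by_cases hxT : x ∈ T
          · -- need inr true ∉ S, go through it
            have htrue : inr true ∈ Sᶜ := by
              intro hc
              have := small true hc
              have hsub : ({u, x} : Set V) ⊆ T := by rintro a (rfl | rfl) <;> assumption
              have := Set.ncard_le_ncard hsub T.toFinite
              rw [Set.ncard_pair (Ne.symm hx)] at this
              omega
            by_cases hv : v ∈ T
            · have hyT : y ∉ T := fun h => hnotall ⟨hu, hxT, hv, h⟩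
              exact ⟨y, hyT, (step _ _ hw htrue hE1).trans (step _ _ htrue (hmemT y hyT) hE5)⟩
            · exact ⟨v, hv, (step _ _ hw htrue hE1).trans (step _ _ htrue (hmemT v hv) hE4)⟩
          · exact ⟨x, hxT, step _ _ hw (hmemT x hxT) hE3⟩
        · exact ⟨u, hu, step _ _ hw (hmemT u hu) hE2⟩
      | true =>
        by_cases hv : v ∈ T
        · by_cases hyT : y ∈ T
          · have hfalse : inr false ∈ Sᶜ := by
              intro hc
              have := small false hc
              have hsub : ({v, y} : Set V) ⊆ T := by rintro a (rfl | rfl) <;> assumption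
              have := Set.ncard_le_ncard hsub T.toFinite
              rw [Set.ncard_pair (Ne.symm hy)] at this
              omega
            by_cases hu : u ∈ T
            · have hxT : x ∉ T := fun h => hnotall ⟨hu, h, hv, hyT⟩
              exact ⟨x, hxT, (step _ _ hw hfalse hE1.symm).trans (step _ _ hfalse (hmemT x hxT) hE3)⟩
            · exact ⟨u, hu, (step _ _ hw hfalse hE1.symm).trans (step _ _ hfalse (hmemT u hu) hE2)⟩
          · exact ⟨y, hyT, step _ _ hw (hmemT y hyT) hE5⟩
        · exact ⟨v, hv, step _ _ hw (hmemT v hv) hE4⟩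
  -- nonempty
  have hTne : Tᶜ.Nonempty := by
    rw [Set.nonempty_iff_ne_empty]
    intro h
    have : T = Set.univ := by rwa [Set.compl_empty_iff] at h
    rw [this, Set.ncard_univ, Nat.card_eq_fintype_card] at hT2
    omega
  obtain ⟨a0, ha0⟩ := hTne
  haveI : Nonempty (Sᶜ : Set (V ⊕ Bool)) := ⟨⟨inl a0, hmemT a0 ha0⟩⟩
  constructor
  rintro ⟨w1, h1⟩ ⟨w2, h2⟩
  obtain ⟨a1, ha1, r1⟩ := anchor w1 h1
  obtain ⟨a2, ha2, r2⟩ := anchor w2 h2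
  exact r1.trans ((key a1 a2 ha1 ha2).trans r2.symm)
end

section
/- Let G be a bicritical graph with at least 4 vertices and let G' be obtained from G by a conservative-quadratic extension with new vertices u', v' (u' adjacent to u, x and to v'; v' adjacent to v, y and to u', where u ≠ x, v ≠ y, u and v non-adjacent in G, {u,v} ≠ {x,y}). Then G' is bicritical. -/
open SimpleGraph Sum

lemma pm_of_fun {W : Type*} {S : Set W} (G : SimpleGraph W) (F : W → W)
    (hmem : ∀ w ∈ S, F w ∈ S) (hinv : ∀ w ∈ S, F (F w) = w)
    (hadj : ∀ w ∈ S, G.Adj w (F w)) :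
    ∃ M : (G.induce S).Subgraph, M.IsPerfectMatching := by
  refine ⟨⟨Set.univ, fun r s => s.1 = F r.1 ∨ r.1 = F s.1, ?_, fun {_ _} _ => trivial, ?_⟩,
    ?_, fun _ => trivial⟩
  · rintro r s (h | h)
    · show G.Adj r.1 s.1
      rw [h]; exact hadj r.1 r.2
    · show G.Adj r.1 s.1
      rw [h]; exact (hadj s.1 s.2).symm
  · constructor; rintro r s (h | h)
    · exact Or.inr h
    · exact Or.inl h
  · rintro r -
    refine ⟨⟨F r.1, hmem r.1 r.2⟩, Or.inl rfl, ?_⟩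
    rintro s (h | h)
    · exact Subtype.ext h
    · refine Subtype.ext ?_
      show s.1 = F r.1
      rw [h, hinv s.1 s.2]

lemma bicrit_fun {V : Type*} {G : SimpleGraph V} (hbc : Bicritical G)
    {a b : V} (hab : a ≠ b) :
    ∃ F : V → V, ∀ w, w ≠ a → w ≠ b →
      F w ≠ a ∧ F w ≠ b ∧ F (F w) = w ∧ G.Adj w (F w) := by
  classical
  obtain ⟨M, hM⟩ := hbc a b hab
  have h := fun r : ({a, b}ᶜ : Set V) => hM.1 (hM.2 r)
  choose f hf hf' using h
  refine ⟨fun w => if h : w ∈ ({a, b}ᶜ : Set V) then (f ⟨w, h⟩).1 else w, ?_⟩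
  intro w hwa hwb
  have hw : w ∈ ({a, b}ᶜ : Set V) := by simp [hwa, hwb]
  have hsub : ∀ r : ({a, b}ᶜ : Set V), G.Adj r.1 (f r).1 := fun r => M.adj_sub (hf r)
  have hmem : ∀ r : ({a, b}ᶜ : Set V), (f r).1 ≠ a ∧ (f r).1 ≠ b := by
    intro r
    have := (f r).2
    simp only [Set.mem_compl_iff, Set.mem_insert_iff, Set.mem_singleton_iff] at this
    push_neg at this
    exact this
  beta_reduce
  rw [dif_pos hw]
  refine ⟨(hmem ⟨w, hw⟩).1, (hmem ⟨w, hw⟩).2, ?_, hsub ⟨w, hw⟩⟩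
  rw [dif_pos (f ⟨w, hw⟩).2]
  have : f ⟨(f ⟨w, hw⟩).1, (f ⟨w, hw⟩).2⟩ = ⟨w, hw⟩ := by
    rw [Subtype.eta]
    exact (hf' (f ⟨w, hw⟩) ⟨w, hw⟩ (M.adj_symm (hf ⟨w, hw⟩))).symm
  rw [this]

lemma bicrit_total {V : Type*} [Fintype V] {G : SimpleGraph V}
    (hcard : 4 ≤ Fintype.card V) (hbc : Bicritical G) :
    ∃ F : V → V, ∀ w, F (F w) = w ∧ G.Adj w (F w) := by
  classical
  obtain ⟨c, d, hcd⟩ := Fintype.exists_pair_of_one_lt_card (α := V) (by omega)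
  obtain ⟨F₀, hF₀⟩ := bicrit_fun hbc hcd
  obtain ⟨p, hpc, hpd⟩ : ∃ p, p ≠ c ∧ p ≠ d := by
    by_contra h
    push_neg at h
    have hsub : (Finset.univ : Finset V) ⊆ {c, d} := by
      intro z _
      simp only [Finset.mem_insert, Finset.mem_singleton]
      by_cases hz : z = c
      · exact Or.inl hz
      · exact Or.inr (h z hz)
    have := Finset.card_le_card hsub
    rw [Finset.card_univ] at this
    have h2 : ({c, d} : Finset V).card ≤ 2 := Finset.card_insert_le _ _ |>.trans (by simp)
    omega
  obtain ⟨hqc, hqd, -, hpq⟩ := hF₀ p hpc hpd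
  set q := F₀ p with hq
  have hpqne : p ≠ q := hpq.ne
  obtain ⟨F₁, hF₁⟩ := bicrit_fun hbc hpqne
  set F : V → V := fun w => if w = p then q else if w = q then p else F₁ w with hF
  have hFp : F p = q := by simp [hF]
  have hFq : F q = p := by simp [hF, Ne.symm hpqne]
  have hFo : ∀ w, w ≠ p → w ≠ q → F w = F₁ w := by intro w h1 h2; simp [hF, h1, h2]
  refine ⟨F, fun w => ?_⟩
  by_cases h1 : w = p
  · subst h1; rw [hFp, hFq]; exact ⟨rfl, hpq⟩
  by_cases h2 : w = q
  · subst h2; rw [hFq, hFp]; exact ⟨rfl, hpq.symm⟩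
  obtain ⟨hw1, hw2, hw3, hw4⟩ := hF₁ w h1 h2
  rw [hFo w h1 h2, hFo _ hw1 hw2]
  exact ⟨hw3, hw4⟩
lemma cqe_adj_inl {V : Type*} {G : SimpleGraph V} {u v x y p q : V} (h : G.Adj p q) :
    (consQuadExt G u v x y).Adj (inl p) (inl q) := by
  rw [consQuadExt, fromEdgeSet_adj]
  exact ⟨Or.inl ⟨s(p, q), h, rfl⟩, by simp [h.ne]⟩

lemma cqe_adj_ft {V : Type*} {G : SimpleGraph V} {u v x y : V} :
    (consQuadExt G u v x y).Adj (inr false) (inr true) := by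
  rw [consQuadExt, fromEdgeSet_adj]; simp

lemma cqe_adj_fu {V : Type*} {G : SimpleGraph V} {u v x y : V} :
    (consQuadExt G u v x y).Adj (inr false) (inl u) := by
  rw [consQuadExt, fromEdgeSet_adj]; simp

lemma cqe_adj_fx {V : Type*} {G : SimpleGraph V} {u v x y : V} :
    (consQuadExt G u v x y).Adj (inr false) (inl x) := by
  rw [consQuadExt, fromEdgeSet_adj]; simp

lemma cqe_adj_tv {V : Type*} {G : SimpleGraph V} {u v x y : V} :
    (consQuadExt G u v x y).Adj (inr true) (inl v) := by
  rw [consQuadExt, fromEdgeSet_adj]; simp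

lemma cqe_adj_ty {V : Type*} {G : SimpleGraph V} {u v x y : V} :
    (consQuadExt G u v x y).Adj (inr true) (inl y) := by
  rw [consQuadExt, fromEdgeSet_adj]; simp

theorem stmt_5 {V : Type*} [Fintype V] (G : SimpleGraph V) (u v x y : V)
    (hcard : 4 ≤ Fintype.card V) (hbc : Bicritical G)
    (huv : u ≠ v) (hadj : ¬ G.Adj u v)
    (hx : x ≠ u) (hy : y ≠ v) (hne : ({u, v} : Set V) ≠ {x, y}) :
    Bicritical (consQuadExt G u v x y) := by
  classical
  intro a b hab
  set G' := consQuadExt G u v x y with hG'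
  -- Case 1: both removed vertices in V
  have caseInl : ∀ a₀ b₀ : V, a₀ ≠ b₀ →
      ∃ M : (G'.induce ({inl a₀, inl b₀}ᶜ : Set (V ⊕ Bool))).Subgraph,
        M.IsPerfectMatching := by
    intro a₀ b₀ h₀
    obtain ⟨F₀, hF₀⟩ := bicrit_fun hbc h₀
    refine pm_of_fun G' (Sum.elim (fun p => inl (F₀ p)) (fun c => inr (!c))) ?_ ?_ ?_
    · rintro (p | c) hz
      · simp only [Set.mem_compl_iff, Set.mem_insert_iff, Set.mem_singleton_iff,
          Sum.elim_inl, Sum.inl.injEq, not_or] at hz ⊢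
        obtain ⟨h1, h2⟩ := hz
        obtain ⟨hp1, hp2, -, -⟩ := hF₀ p h1 h2
        exact ⟨hp1, hp2⟩
      · simp
    · rintro (p | c) hz
      · simp only [Set.mem_compl_iff, Set.mem_insert_iff, Set.mem_singleton_iff,
          Sum.inl.injEq, not_or] at hz
        obtain ⟨h1, h2⟩ := hz
        obtain ⟨-, -, h3, -⟩ := hF₀ p h1 h2
        simp [h3]
      · simp
    · rintro (p | c) hz
      · simp only [Set.mem_compl_iff, Set.mem_insert_iff, Set.mem_singleton_iff,
          Sum.inl.injEq, not_or] at hz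
        obtain ⟨h1, h2⟩ := hz
        obtain ⟨-, -, -, h4⟩ := hF₀ p h1 h2
        exact cqe_adj_inl h4
      · cases c
        · exact cqe_adj_ft
        · exact cqe_adj_ft.symm
  -- Case 2: both new vertices removed
  have caseRR :
      ∃ M : (G'.induce ({inr false, inr true}ᶜ : Set (V ⊕ Bool))).Subgraph,
        M.IsPerfectMatching := by
    obtain ⟨Fg, hFg⟩ := bicrit_total hcard hbc
    refine pm_of_fun G' (Sum.elim (fun p => inl (Fg p)) (fun c => inr c)) ?_ ?_ ?_
    · rintro (p | c) hz
      · simp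
      · exfalso; cases c <;> simp at hz
    · rintro (p | c) hz
      · simp [(hFg p).1]
      · exfalso; cases c <;> simp at hz
    · rintro (p | c) hz
      · exact cqe_adj_inl (hFg p).2
      · exfalso; cases c <;> simp at hz
  -- Case 3: one vertex of V and u' (= inr false) removed; v' matched into {v, y}
  have caseF : ∀ a₀ : V,
      ∃ M : (G'.induce ({inl a₀, inr false}ᶜ : Set (V ⊕ Bool))).Subgraph,
        M.IsPerfectMatching := by
    intro a₀
    set w : V := if v = a₀ then y else v with hw
    have hw1 : w ≠ a₀ := by
      rw [hw]; by_cases h : v = a₀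
      · simpa [h] using (h ▸ hy)
      · simpa [h] using h
    have hwadj : G'.Adj (inr true) (inl w) := by
      rw [hw]; by_cases h : v = a₀ <;> simp only [h, if_true, if_false, reduceIte]
      · exact cqe_adj_ty
      · exact cqe_adj_tv
    obtain ⟨F₁, hF₁⟩ := bicrit_fun hbc (Ne.symm hw1)
    refine pm_of_fun G'
      (Sum.elim (fun p => if p = w then inr true else inl (F₁ p)) (fun _ => inl w)) ?_ ?_ ?_
    · rintro (p | c) hz
      · simp only [Set.mem_compl_iff, Set.mem_insert_iff, Set.mem_singleton_iff,
          not_or] at hz ⊢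
        by_cases h : p = w
        · simp [h]
        · have hp : p ≠ a₀ := fun hh => hz.1 (by rw [hh])
          obtain ⟨h1, -, -, -⟩ := hF₁ p hp h
          simp [h, h1]
      · simp [hw1]
    · rintro (p | c) hz
      · simp only [Set.mem_compl_iff, Set.mem_insert_iff, Set.mem_singleton_iff,
          not_or, Sum.inl.injEq] at hz
        by_cases h : p = w
        · simp [h]
        · obtain ⟨-, h2, h3, -⟩ := hF₁ p hz.1 h
          simp [h, h2, h3]
      · have hc : c = true := by
          cases c
          · exfalso; simp at hz
          · rfl
        simp [hc]
    · rintro (p | c) hz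
      · simp only [Set.mem_compl_iff, Set.mem_insert_iff, Set.mem_singleton_iff,
          not_or, Sum.inl.injEq] at hz
        by_cases h : p = w
        · simpa [h] using hwadj.symm
        · obtain ⟨-, -, -, h4⟩ := hF₁ p hz.1 h
          simpa [h] using cqe_adj_inl h4
      · have hc : c = true := by
          cases c
          · exfalso; simp at hz
          · rfl
        simpa [hc] using hwadj
  -- Case 4: one vertex of V and v' (= inr true) removed; u' matched into {u, x}
  have caseT : ∀ a₀ : V,
      ∃ M : (G'.induce ({inl a₀, inr true}ᶜ : Set (V ⊕ Bool))).Subgraph,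
        M.IsPerfectMatching := by
    intro a₀
    set w : V := if u = a₀ then x else u with hw
    have hw1 : w ≠ a₀ := by
      rw [hw]; by_cases h : u = a₀
      · simpa [h] using (h ▸ hx)
      · simpa [h] using h
    have hwadj : G'.Adj (inr false) (inl w) := by
      rw [hw]; by_cases h : u = a₀ <;> simp only [h, if_true, if_false, reduceIte]
      · exact cqe_adj_fx
      · exact cqe_adj_fu
    obtain ⟨F₁, hF₁⟩ := bicrit_fun hbc (Ne.symm hw1)
    refine pm_of_fun G'
      (Sum.elim (fun p => if p = w then inr false else inl (F₁ p)) (fun _ => inl w)) ?_ ?_ ?_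
    · rintro (p | c) hz
      · simp only [Set.mem_compl_iff, Set.mem_insert_iff, Set.mem_singleton_iff,
          not_or] at hz ⊢
        by_cases h : p = w
        · simp [h]
        · have hp : p ≠ a₀ := fun hh => hz.1 (by rw [hh])
          obtain ⟨h1, -, -, -⟩ := hF₁ p hp h
          simp [h, h1]
      · simp [hw1]
    · rintro (p | c) hz
      · simp only [Set.mem_compl_iff, Set.mem_insert_iff, Set.mem_singleton_iff,
          not_or, Sum.inl.injEq] at hz
        by_cases h : p = w
        · simp [h]
        · obtain ⟨-, h2, h3, -⟩ := hF₁ p hz.1 h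
          simp [h, h2, h3]
      · have hc : c = false := by
          cases c
          · rfl
          · exfalso; simp at hz
        simp [hc]
    · rintro (p | c) hz
      · simp only [Set.mem_compl_iff, Set.mem_insert_iff, Set.mem_singleton_iff,
          not_or, Sum.inl.injEq] at hz
        by_cases h : p = w
        · simpa [h] using hwadj.symm
        · obtain ⟨-, -, -, h4⟩ := hF₁ p hz.1 h
          simpa [h] using cqe_adj_inl h4
      · have hc : c = false := by
          cases c
          · rfl
          · exfalso; simp at hz
        simpa [hc] using hwadj
  -- dispatch
  rcases a with a₀ | c
  · rcases b with b₀ | c'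
    · exact caseInl a₀ b₀ (by simpa using hab)
    · cases c'
      · exact caseF a₀
      · exact caseT a₀
  · rcases b with b₀ | c'
    · rw [Set.pair_comm]
      cases c
      · exact caseF b₀
      · exact caseT b₀
    · cases c <;> cases c'
      · exact absurd rfl hab
      · exact caseRR
      · rw [Set.pair_comm]; exact caseRR
      · exact absurd rfl hab
end

section
/- Let G be a 3-connected graph, let G' be a conservative-quadratic extension of G with new vertices u', v', and suppose {w, z} is a 2-vertex cutset of G' - u'u separating u from u' (with u ∈ one side, u' ∈ the other). Then the whole of G lies on the side containing u, and x ∈ {w, z}, where x is the second neighbour of u' in G. -/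
open SimpleGraph Sum

theorem stmt_15 {V : Type*} [Fintype V] (G : SimpleGraph V) (u v x y : V)
    (h3 : ThreeConnected G) (huv : u ≠ v) (hadj : ¬ G.Adj u v)
    (hx : x ≠ u) (hy : y ≠ v) (hne : ({u, v} : Set V) ≠ {x, y})
    (w z : V ⊕ Bool) (hwz : w ≠ z)
    (hu : (inl u : V ⊕ Bool) ∈ ({w, z} : Set (V ⊕ Bool))ᶜ)
    (hu' : (inr false : V ⊕ Bool) ∈ ({w, z} : Set (V ⊕ Bool))ᶜ)
    (hsep : ¬ (((consQuadExt G u v x y).deleteEdges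
          {s((inl u : V ⊕ Bool), inr false)}).induce
        (({w, z} : Set (V ⊕ Bool))ᶜ)).Reachable ⟨inl u, hu⟩ ⟨inr false, hu'⟩) :
    (∀ t : V, ∀ ht : (inl t : V ⊕ Bool) ∈ ({w, z} : Set (V ⊕ Bool))ᶜ,
      (((consQuadExt G u v x y).deleteEdges
          {s((inl u : V ⊕ Bool), inr false)}).induce
        (({w, z} : Set (V ⊕ Bool))ᶜ)).Reachable ⟨inl t, ht⟩ ⟨inl u, hu⟩) ∧
    (inl x : V ⊕ Bool) ∈ ({w, z} : Set (V ⊕ Bool)) := by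

  classical
  set S : Set V := {a | (inl a : V ⊕ Bool) ∈ ({w, z} : Set (V ⊕ Bool))} with hS
  have hScard : S.ncard ≤ 2 := by
    have h1 : (inl '' S : Set (V ⊕ Bool)) ⊆ {w, z} := by
      rintro _ ⟨a, ha, rfl⟩; exact ha
    have h2 := Set.ncard_le_ncard h1 ((Set.finite_singleton z).insert w)
    rw [Set.ncard_image_of_injective _ inl_injective] at h2
    calc S.ncard ≤ ({w, z} : Set (V ⊕ Bool)).ncard := h2
      _ = 2 := Set.ncard_pair hwz
  have hadjmap : ∀ (a b : V) (ha : (inl a : V ⊕ Bool) ∈ ({w, z} : Set (V ⊕ Bool))ᶜ)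
      (hb : (inl b : V ⊕ Bool) ∈ ({w, z} : Set (V ⊕ Bool))ᶜ), G.Adj a b →
      (((consQuadExt G u v x y).deleteEdges
          {s((inl u : V ⊕ Bool), inr false)}).induce
        (({w, z} : Set (V ⊕ Bool))ᶜ)).Adj ⟨inl a, ha⟩ ⟨inl b, hb⟩ := by
    intro a b ha hb hab
    show ((consQuadExt G u v x y).deleteEdges _).Adj (inl a) (inl b)
    rw [SimpleGraph.deleteEdges_adj]
    constructor
    · rw [consQuadExt, SimpleGraph.fromEdgeSet_adj]
      refine ⟨Or.inl ⟨s(a, b), G.mem_edgeSet.mpr hab, rfl⟩, by simp [hab.ne]⟩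
    · simp [Sym2.eq, Sym2.rel_iff']
  have hcon := h3.2 S hScard
  have part1 : ∀ t : V, ∀ ht : (inl t : V ⊕ Bool) ∈ ({w, z} : Set (V ⊕ Bool))ᶜ,
      (((consQuadExt G u v x y).deleteEdges
          {s((inl u : V ⊕ Bool), inr false)}).induce
        (({w, z} : Set (V ⊕ Bool))ᶜ)).Reachable ⟨inl t, ht⟩ ⟨inl u, hu⟩ := by
    intro t ht
    have htS : t ∈ Sᶜ := ht
    have huS : u ∈ Sᶜ := hu
    have hre := hcon.preconnected ⟨t, htS⟩ ⟨u, huS⟩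
    let f : (G.induce Sᶜ) →g (((consQuadExt G u v x y).deleteEdges
          {s((inl u : V ⊕ Bool), inr false)}).induce
        (({w, z} : Set (V ⊕ Bool))ᶜ)) :=
      ⟨fun p => ⟨inl p.1, p.2⟩, fun {p q} hpq => hadjmap p.1 q.1 p.2 q.2 hpq⟩
    exact hre.map f
  refine ⟨part1, ?_⟩
  by_contra hxwz
  have hx' : (inl x : V ⊕ Bool) ∈ ({w, z} : Set (V ⊕ Bool))ᶜ := hxwz
  have hadjx : (((consQuadExt G u v x y).deleteEdges
          {s((inl u : V ⊕ Bool), inr false)}).induce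
        (({w, z} : Set (V ⊕ Bool))ᶜ)).Adj ⟨inr false, hu'⟩ ⟨inl x, hx'⟩ := by
    show ((consQuadExt G u v x y).deleteEdges _).Adj (inr false) (inl x)
    rw [SimpleGraph.deleteEdges_adj]
    constructor
    · rw [consQuadExt, SimpleGraph.fromEdgeSet_adj]
      exact ⟨Or.inr (by simp), by simp⟩
    · simp [Sym2.eq, Sym2.rel_iff', hx]
  exact hsep ((part1 x hx').symm.trans hadjx.symm.reachable)
end

section
/- If a graph G on at least 6 vertices is 3-connected and G' is obtained from G by a quasiquartic extension (delete the edges uv and xy if present, add four new vertices u', v', x', y' forming the 4-cycle u'v'y'x'u', and add the edges uu', vv', xx', yy', where u ≠ v, x ≠ y, u ≠ y, v ≠ x, {u,v} ≠ {x,y}), then G' is 3-connected. -/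
open SimpleGraph Sum

/-- Quasiquartic extension: delete the edges `uv` and `xy` (if present), add the
new vertices `u' = inr 0`, `v' = inr 1`, `y' = inr 2`, `x' = inr 3` forming the
4-cycle `u'v'y'x'u'`, and join `u'` to `u`, `v'` to `v`, `x'` to `x`, `y'` to `y`. -/
def quasiQuarticExt {V : Type*} (G : SimpleGraph V) (u v x y : V) :
    SimpleGraph (V ⊕ Fin 4) :=
  SimpleGraph.fromEdgeSet
    ((Sym2.map inl '' G.edgeSet \
        {s((inl u : V ⊕ Fin 4), inl v), s((inl x : V ⊕ Fin 4), inl y)}) ∪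
      {s((inr 0 : V ⊕ Fin 4), inr 1), s((inr 1 : V ⊕ Fin 4), inr 2),
       s((inr 2 : V ⊕ Fin 4), inr 3), s((inr 3 : V ⊕ Fin 4), inr 0),
       s(inl u, (inr 0 : V ⊕ Fin 4)), s(inl v, (inr 1 : V ⊕ Fin 4)),
       s(inl x, (inr 3 : V ⊕ Fin 4)), s(inl y, (inr 2 : V ⊕ Fin 4))})

lemma aux_exists_adj {α : Type*} {H : SimpleGraph α} {a b : α}
    (h : H.Reachable a b) (hne : a ≠ b) : ∃ c, H.Adj a c := by
  obtain ⟨w⟩ := h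
  cases w with
  | nil => exact absurd rfl hne
  | cons h' _ => exact ⟨_, h'⟩

lemma aux_reach_closed {α : Type*} {H : SimpleGraph α} {C : Set α}
    (hC : ∀ ⦃z w⦄, z ∈ C → H.Adj z w → w ∈ C) {a b : α}
    (ha : a ∈ C) (h : H.Reachable a b) : b ∈ C := by
  obtain ⟨w⟩ := h
  induction w with
  | nil => exact ha
  | cons hadj _ ih => exact ih (hC ha hadj)

lemma aux_reach_or_endpoint {α : Type*} {H : SimpleGraph α} (F : Set (Sym2 α)) {a b : α}
    (w : H.Walk a b) :
    ∃ p, (H.deleteEdges F).Reachable a p ∧ (p = b ∨ ∃ e ∈ F, p ∈ e) := by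
  induction w with
  | nil => exact ⟨_, Reachable.refl _, Or.inl rfl⟩
  | @cons a c b h _ ih =>
    by_cases hF : s(a, c) ∈ F
    · exact ⟨a, Reachable.refl a, Or.inr ⟨_, hF, Sym2.mem_mk_left _ _⟩⟩
    · obtain ⟨p', hr, ho⟩ := ih
      exact ⟨p', (SimpleGraph.Adj.reachable (by rw [deleteEdges_adj]; exact ⟨h, hF⟩)).trans hr, ho⟩

lemma aux_mindeg {V : Type*} [Fintype V] {G : SimpleGraph V}
    (hcard : 6 ≤ Fintype.card V) (h3 : ThreeConnected G) (a b c : V) :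
    ∃ n, G.Adj a n ∧ n ≠ b ∧ n ≠ c := by
  classical
  set T : Set V := ({b, c} : Set V) \ {a} with hT
  have hT2 : T.ncard ≤ 2 := by
    calc T.ncard ≤ ({b, c} : Set V).ncard := Set.ncard_le_ncard (Set.diff_subset) (Set.toFinite _)
    _ ≤ 2 := Set.ncard_insert_le _ _ |>.trans (by simp [Set.ncard_singleton])
  have hconn := h3.2 T hT2
  have haT : a ∈ Tᶜ := by simp [hT]
  have hbig : 1 < (Tᶜ : Set V).ncard := by
    have h1 := Set.ncard_add_ncard_compl T
    have h2 : (Nat.card V) = Fintype.card V := Nat.card_eq_fintype_card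
    omega
  obtain ⟨z1, hz1, z2, hz2, hz12⟩ := (Set.one_lt_ncard (Set.toFinite _)).mp hbig
  have hz : ∃ z ∈ (Tᶜ : Set V), z ≠ a := by
    rcases eq_or_ne z1 a with rfl | h
    · exact ⟨z2, hz2, hz12.symm⟩
    · exact ⟨z1, hz1, h⟩
  obtain ⟨z, hzT, hza⟩ := hz
  have hr := hconn ⟨a, haT⟩ ⟨z, hzT⟩
  obtain ⟨n, hn⟩ := aux_exists_adj hr (by simp [Subtype.ext_iff, (Ne.symm hza).symm]; exact hza.symm)
  have hadj : G.Adj a n.val := hn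
  have hnT : n.val ∉ T := n.property
  refine ⟨n.val, hadj, ?_, ?_⟩
  · rcases eq_or_ne b a with rfl | hba
    · exact fun h => by simp [h] at hadj
    · intro h; exact hnT (by simp [hT, h, hba])
  · rcases eq_or_ne c a with rfl | hca
    · exact fun h => by simp [h] at hadj
    · intro h; exact hnT (by simp [hT, h, hca])

lemma aux_cross {V : Type*} [Fintype V] {G : SimpleGraph V}
    (hcard : 6 ≤ Fintype.card V) (h3 : ThreeConnected G)
    (p₁ p₂ q₁ q₂ : V) (hq : q₁ ≠ q₂)
    (W : Set V) (hW : W.ncard ≤ 1)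
    (F : Set (Sym2 ↥(Wᶜ : Set V)))
    (hF : ∀ e, e ∈ F ↔ Sym2.map Subtype.val e = s(p₁, p₂) ∨ Sym2.map Subtype.val e = s(q₁, q₂))
    {a b : V} (ha : a ∈ (Wᶜ : Set V)) (hb : b ∈ (Wᶜ : Set V))
    (hnr : ¬ ((G.induce Wᶜ).deleteEdges F).Reachable ⟨a, ha⟩ ⟨b, hb⟩) :
    ∃ z, (z = p₁ ∨ z = p₂) ∧ ∃ hz : z ∈ (Wᶜ : Set V),
      ((G.induce Wᶜ).deleteEdges F).Reachable ⟨a, ha⟩ ⟨z, hz⟩ := by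
  classical
  set K' := (G.induce Wᶜ).deleteEdges F with hK'
  set Cset : Set V := {z | ∃ h : z ∈ (Wᶜ : Set V), K'.Reachable ⟨a, ha⟩ ⟨z, h⟩} with hCset
  have haC : a ∈ Cset := ⟨ha, Reachable.refl _⟩
  have hbC : b ∉ Cset := by
    rintro ⟨h, hr⟩
    exact hnr hr
  have hab : a ≠ b := by rintro rfl; exact hnr (Reachable.refl _)
  have hstep : ∀ {c d : V}, c ∈ Cset → d ∈ (Wᶜ : Set V) → G.Adj c d →
      ¬(s(c, d) = s(p₁, p₂) ∨ s(c, d) = s(q₁, q₂)) → d ∈ Cset := by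
    rintro c d ⟨hcW, hr⟩ hdW hadj hne
    refine ⟨hdW, hr.trans (SimpleGraph.Adj.reachable ?_)⟩
    rw [deleteEdges_adj]
    refine ⟨hadj, fun hmem => hne ?_⟩
    have := (hF _).mp hmem
    simpa using this
  by_cases hcrossP : ∃ c d : V, c ∈ Cset ∧ d ∈ (Wᶜ : Set V) ∧ G.Adj c d ∧ d ∉ Cset ∧
      s(c, d) = s(p₁, p₂)
  · obtain ⟨c, d, hc, hdW, hadj, hdC, hs⟩ := hcrossP
    have hcz : c = p₁ ∨ c = p₂ := by
      rcases Sym2.eq_iff.mp hs with ⟨h1, _⟩ | ⟨h1, _⟩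
      · exact Or.inl h1
      · exact Or.inr h1
    exact ⟨c, hcz, hc⟩
  · exfalso
    have hstep2 : ∀ {c d : V}, c ∈ Cset → d ∈ (Wᶜ : Set V) → G.Adj c d → d ∉ Cset →
        s(c, d) = s(q₁, q₂) := by
      intro c d hc hdW hadj hdC
      by_contra hne
      rcases eq_or_ne (s(c, d) : Sym2 V) s(p₁, p₂) with hp | hp
      · exact hcrossP ⟨c, d, hc, hdW, hadj, hdC, hp⟩
      · exact hdC (hstep hc hdW hadj (by tauto))
    have main : ∀ m c₀ : V, c₀ ∈ Cset → c₀ ≠ m → b ≠ m →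
        (∀ {c d : V}, c ∈ Cset → d ∈ (Wᶜ : Set V) → G.Adj c d → c ≠ m → d ≠ m → d ∈ Cset) →
        False := by
      intro m c₀ hc₀ hc₀m hbm hcl
      obtain ⟨hc₀W, -⟩ := id hc₀
      set T : Set V := insert m W with hT
      have hT2 : T.ncard ≤ 2 := (Set.ncard_insert_le _ _).trans (by omega)
      have hconn := h3.2 T hT2
      have hc₀T : c₀ ∈ Tᶜ := by
        simp only [hT, Set.mem_compl_iff, Set.mem_insert_iff, not_or]
        exact ⟨hc₀m, hc₀W⟩
      have hbT : b ∈ Tᶜ := by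
        simp only [hT, Set.mem_compl_iff, Set.mem_insert_iff, not_or]
        exact ⟨hbm, hb⟩
      have hkey : (⟨b, hbT⟩ : ↥(Tᶜ : Set V)) ∈ {z : ↥(Tᶜ : Set V) | z.val ∈ Cset} := by
        refine aux_reach_closed ?_ (a := ⟨c₀, hc₀T⟩) hc₀ (hconn ⟨c₀, hc₀T⟩ ⟨b, hbT⟩)
        rintro ⟨z, hzT⟩ ⟨w, hwT⟩ hz hadj
        simp only [hT, Set.mem_compl_iff, Set.mem_insert_iff, not_or] at hzT hwT
        exact hcl hz hwT.2 hadj hzT.1 hwT.1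
      exact hbC hkey
    rcases eq_or_ne a q₁ with haq1 | haq1
    · rcases eq_or_ne b q₂ with hbq2 | hbq2
      · have hsab : (s(q₁, q₂) : Sym2 V) = s(a, b) := by rw [haq1, hbq2]
        have hstep3 : ∀ {c d : V}, c ∈ Cset → d ∈ (Wᶜ : Set V) → G.Adj c d → c ≠ a →
            d ∈ Cset := by
          intro c d hc hdW hadj hca
          by_contra hdC
          have := (hstep2 hc hdW hadj hdC).trans hsab
          rcases Sym2.eq_iff.mp this with ⟨h1, _⟩ | ⟨h1, h2⟩
          · exact hca h1
          · exact hbC (h1 ▸ hc)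
        by_cases hone : ∀ z ∈ Cset, z = a
        · have hW1 : ∃ w₀ : V, ∀ z ∈ W, z = w₀ := by
            rcases (Set.ncard_le_one_iff_eq (Set.toFinite _)).mp hW with hWe | ⟨w₀, hWe⟩
            · exact ⟨b, by simp [hWe]⟩
            · exact ⟨w₀, by simp [hWe]⟩
          obtain ⟨w₀, hw₀⟩ := hW1
          obtain ⟨n, hadj, hnb, hnw⟩ := aux_mindeg hcard h3 a b w₀
          have hnW : n ∈ (Wᶜ : Set V) := fun hn => hnw (hw₀ n hn)
          have hnC : n ∉ Cset := fun hn => G.irrefl (hone n hn ▸ hadj)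
          have := (hstep2 haC hnW hadj hnC).trans hsab
          rcases Sym2.eq_iff.mp this with ⟨_, h2⟩ | ⟨h1, _⟩
          · exact hnb h2
          · exact hab h1
        · push_neg at hone
          obtain ⟨c₀, hc₀, hc₀a⟩ := hone
          exact main a c₀ hc₀ hc₀a (Ne.symm hab)
            (fun hc hdW hadj hcm _ => hstep3 hc hdW hadj hcm)
      · refine main q₂ a haC (haq1 ▸ hq) hbq2 ?_
        intro c d hc hdW hadj hcm hdm
        by_contra hdC
        rcases Sym2.eq_iff.mp (hstep2 hc hdW hadj hdC) with ⟨_, h2⟩ | ⟨h1, _⟩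
        · exact hdm h2
        · exact hcm h1
    · rcases eq_or_ne b q₁ with hbq1 | hbq1
      · rcases eq_or_ne a q₂ with haq2 | haq2
        · have hsab : (s(q₁, q₂) : Sym2 V) = s(a, b) := by
            rw [haq2, hbq1]; exact Sym2.eq_swap
          have hstep3 : ∀ {c d : V}, c ∈ Cset → d ∈ (Wᶜ : Set V) → G.Adj c d → c ≠ a →
              d ∈ Cset := by
            intro c d hc hdW hadj hca
            by_contra hdC
            have := (hstep2 hc hdW hadj hdC).trans hsab
            rcases Sym2.eq_iff.mp this with ⟨h1, _⟩ | ⟨h1, h2⟩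
            · exact hca h1
            · exact hbC (h1 ▸ hc)
          by_cases hone : ∀ z ∈ Cset, z = a
          · have hW1 : ∃ w₀ : V, ∀ z ∈ W, z = w₀ := by
              rcases (Set.ncard_le_one_iff_eq (Set.toFinite _)).mp hW with hWe | ⟨w₀, hWe⟩
              · exact ⟨b, by simp [hWe]⟩
              · exact ⟨w₀, by simp [hWe]⟩
            obtain ⟨w₀, hw₀⟩ := hW1
            obtain ⟨n, hadj, hnb, hnw⟩ := aux_mindeg hcard h3 a b w₀
            have hnW : n ∈ (Wᶜ : Set V) := fun hn => hnw (hw₀ n hn)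
            have hnC : n ∉ Cset := fun hn => G.irrefl (hone n hn ▸ hadj)
            have := (hstep2 haC hnW hadj hnC).trans hsab
            rcases Sym2.eq_iff.mp this with ⟨_, h2⟩ | ⟨h1, _⟩
            · exact hnb h2
            · exact hab h1
          · push_neg at hone
            obtain ⟨c₀, hc₀, hc₀a⟩ := hone
            exact main a c₀ hc₀ hc₀a (Ne.symm hab)
              (fun hc hdW hadj hcm _ => hstep3 hc hdW hadj hcm)
        · refine main q₂ a haC haq2 (hbq1 ▸ hq) ?_
          intro c d hc hdW hadj hcm hdm
          by_contra hdC
          rcases Sym2.eq_iff.mp (hstep2 hc hdW hadj hdC) with ⟨_, h2⟩ | ⟨h1, _⟩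
          · exact hdm h2
          · exact hcm h1
      · refine main q₁ a haC haq1 hbq1 ?_
        intro c d hc hdW hadj hcm hdm
        by_contra hdC
        rcases Sym2.eq_iff.mp (hstep2 hc hdW hadj hdC) with ⟨h1, _⟩ | ⟨_, h2⟩
        · exact hcm h1
        · exact hdm h2

set_option maxHeartbeats 2000000 in
theorem stmt_19 {V : Type*} [Fintype V] (G : SimpleGraph V) (u v x y : V)
    (hcard : 6 ≤ Fintype.card V) (h3 : ThreeConnected G)
    (huv : u ≠ v) (hxy : x ≠ y) (huy : u ≠ y) (hvx : v ≠ x)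
    (hne : ({u, v} : Set V) ≠ {x, y}) :
    ThreeConnected (quasiQuarticExt G u v x y) := by
  classical
  constructor
  · rw [Fintype.card_sum]
    omega
  intro S hS
  set Q := quasiQuarticExt G u v x y with hQdef
  set Sv : Set V := {a : V | (inl a : V ⊕ Fin 4) ∈ S} with hSvdef
  have hSfin : S.Finite := Set.toFinite S
  -- if S contains two given distinct elements, it is exactly that pair
  have hpair : ∀ e₁ e₂ : V ⊕ Fin 4, e₁ ≠ e₂ → e₁ ∈ S → e₂ ∈ S →
      ∀ z ∈ S, z = e₁ ∨ z = e₂ := by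
    intro e₁ e₂ hne12 h1 h2 z hz
    have hsub : ({e₁, e₂} : Set (V ⊕ Fin 4)) ⊆ S := by
      intro w hw
      simp only [Set.mem_insert_iff, Set.mem_singleton_iff] at hw
      rcases hw with rfl | rfl
      · exact h1
      · exact h2
    have h22 : ({e₁, e₂} : Set (V ⊕ Fin 4)).ncard = 2 := Set.ncard_pair hne12
    have hEq : ({e₁, e₂} : Set (V ⊕ Fin 4)) = S :=
      Set.eq_of_subset_of_ncard_le hsub (by omega) hSfin
    rw [← hEq] at hz
    simpa using hz
  have hSv2 : Sv.ncard ≤ 2 := by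
    have hsub : inl '' Sv ⊆ S := by rintro _ ⟨a, ha, rfl⟩; exact ha
    calc Sv.ncard = (inl '' Sv).ncard :=
      (Set.ncard_image_of_injective _ (inl_injective (α := V) (β := Fin 4))).symm
    _ ≤ S.ncard := Set.ncard_le_ncard hsub hSfin
    _ ≤ 2 := hS
  have hSv1 : ∀ i : Fin 4, (inr i : V ⊕ Fin 4) ∈ S → Sv.ncard ≤ 1 := by
    intro i hi
    have hsub : insert (inr i) (inl '' Sv) ⊆ S := by
      rintro z (rfl | ⟨a, ha, rfl⟩)
      · exact hi
      · exact ha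
    have hnotmem : (inr i : V ⊕ Fin 4) ∉ inl '' Sv := by simp
    have hcard2 : (insert (inr i) (inl '' Sv)).ncard = (inl '' Sv).ncard + 1 :=
      Set.ncard_insert_of_notMem hnotmem (Set.toFinite _)
    have him : (inl '' Sv).ncard = Sv.ncard :=
      Set.ncard_image_of_injective _ (inl_injective (α := V) (β := Fin 4))
    have hle : (insert (inr i) (inl '' Sv)).ncard ≤ S.ncard :=
      Set.ncard_le_ncard hsub hSfin
    omega
  -- adjacency lemmas
  have hQadj : ∀ {a b : V}, G.Adj a b → s(a, b) ≠ s(u, v) → s(a, b) ≠ s(x, y) →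
      Q.Adj (inl a) (inl b) := by
    intro a b hab h1 h2
    rw [hQdef, quasiQuarticExt, fromEdgeSet_adj]
    refine ⟨Or.inl ⟨⟨s(a, b), hab, by simp⟩, ?_⟩, by simp [hab.ne]⟩
    simp only [Set.mem_insert_iff, Set.mem_singleton_iff, not_or]
    constructor
    · intro h
      exact h1 (Sym2.map.injective inl_injective
        (by rw [Sym2.map_pair_eq, Sym2.map_pair_eq]; exact h))
    · intro h
      exact h2 (Sym2.map.injective inl_injective
        (by rw [Sym2.map_pair_eq, Sym2.map_pair_eq]; exact h))
  have hadj01 : Q.Adj (inr 0) (inr 1) := by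
    rw [hQdef, quasiQuarticExt, fromEdgeSet_adj]; exact ⟨Or.inr (by simp), by simp⟩
  have hadj12 : Q.Adj (inr 1) (inr 2) := by
    rw [hQdef, quasiQuarticExt, fromEdgeSet_adj]; exact ⟨Or.inr (by simp), by simp⟩
  have hadj23 : Q.Adj (inr 2) (inr 3) := by
    rw [hQdef, quasiQuarticExt, fromEdgeSet_adj]; exact ⟨Or.inr (by simp), by simp⟩
  have hadj30 : Q.Adj (inr 3) (inr 0) := by
    rw [hQdef, quasiQuarticExt, fromEdgeSet_adj]; exact ⟨Or.inr (by simp), by simp⟩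
  have hadjU : Q.Adj (inl u) (inr 0) := by
    rw [hQdef, quasiQuarticExt, fromEdgeSet_adj]; exact ⟨Or.inr (by simp), by simp⟩
  have hadjV : Q.Adj (inl v) (inr 1) := by
    rw [hQdef, quasiQuarticExt, fromEdgeSet_adj]; exact ⟨Or.inr (by simp), by simp⟩
  have hadjY : Q.Adj (inl y) (inr 2) := by
    rw [hQdef, quasiQuarticExt, fromEdgeSet_adj]; exact ⟨Or.inr (by simp), by simp⟩
  have hadjX : Q.Adj (inl x) (inr 3) := by
    rw [hQdef, quasiQuarticExt, fromEdgeSet_adj]; exact ⟨Or.inr (by simp), by simp⟩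
  -- step in the induced graph
  have hstepG : ∀ {z w : V ⊕ Fin 4} (hz : z ∈ Sᶜ) (hw : w ∈ Sᶜ), Q.Adj z w →
      (Q.induce Sᶜ).Reachable ⟨z, hz⟩ ⟨w, hw⟩ := by
    intro z w hz hw h
    exact SimpleGraph.Adj.reachable h
  -- ring reachability when at most one ring vertex is dead
  have ring_reach : (∀ i j : Fin 4, (inr i : V ⊕ Fin 4) ∈ S → (inr j : V ⊕ Fin 4) ∈ S → i = j) →
      ∀ (i j : Fin 4) (hi : (inr i : V ⊕ Fin 4) ∈ Sᶜ) (hj : (inr j : V ⊕ Fin 4) ∈ Sᶜ),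
      (Q.induce Sᶜ).Reachable ⟨inr i, hi⟩ ⟨inr j, hj⟩ := by
    intro hone i j hi hj
    have R01 : ∀ (h0 : (inr 0 : V ⊕ Fin 4) ∈ Sᶜ) (h1 : (inr 1 : V ⊕ Fin 4) ∈ Sᶜ),
        (Q.induce Sᶜ).Reachable ⟨inr 0, h0⟩ ⟨inr 1, h1⟩ := fun h0 h1 => hstepG h0 h1 hadj01
    have R12 : ∀ (h1 : (inr 1 : V ⊕ Fin 4) ∈ Sᶜ) (h2 : (inr 2 : V ⊕ Fin 4) ∈ Sᶜ),
        (Q.induce Sᶜ).Reachable ⟨inr 1, h1⟩ ⟨inr 2, h2⟩ := fun h1 h2 => hstepG h1 h2 hadj12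
    have R23 : ∀ (h2 : (inr 2 : V ⊕ Fin 4) ∈ Sᶜ) (h3' : (inr 3 : V ⊕ Fin 4) ∈ Sᶜ),
        (Q.induce Sᶜ).Reachable ⟨inr 2, h2⟩ ⟨inr 3, h3'⟩ := fun h2 h3' => hstepG h2 h3' hadj23
    have R30 : ∀ (h3' : (inr 3 : V ⊕ Fin 4) ∈ Sᶜ) (h0 : (inr 0 : V ⊕ Fin 4) ∈ Sᶜ),
        (Q.induce Sᶜ).Reachable ⟨inr 3, h3'⟩ ⟨inr 0, h0⟩ := fun h3' h0 => hstepG h3' h0 hadj30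
    have R02 : ∀ (h0 : (inr 0 : V ⊕ Fin 4) ∈ Sᶜ) (h2 : (inr 2 : V ⊕ Fin 4) ∈ Sᶜ),
        (Q.induce Sᶜ).Reachable ⟨inr 0, h0⟩ ⟨inr 2, h2⟩ := by
      intro h0 h2
      by_cases hm : (inr 1 : V ⊕ Fin 4) ∈ S
      · have h3' : (inr 3 : V ⊕ Fin 4) ∈ Sᶜ := by
          intro hmem
          exact absurd (hone 3 1 hmem hm) (by decide)
        exact ((R30 h3' h0).symm).trans (R23 h2 h3').symm
      · exact (R01 h0 hm).trans (R12 hm h2)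
    have R13 : ∀ (h1 : (inr 1 : V ⊕ Fin 4) ∈ Sᶜ) (h3' : (inr 3 : V ⊕ Fin 4) ∈ Sᶜ),
        (Q.induce Sᶜ).Reachable ⟨inr 1, h1⟩ ⟨inr 3, h3'⟩ := by
      intro h1 h3'
      by_cases hm : (inr 2 : V ⊕ Fin 4) ∈ S
      · have h0 : (inr 0 : V ⊕ Fin 4) ∈ Sᶜ := by
          intro hmem
          exact absurd (hone 0 2 hmem hm) (by decide)
        exact ((R01 h0 h1).symm).trans (R30 h3' h0).symm
      · exact (R12 h1 hm).trans (R23 hm h3')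
    fin_cases i <;> fin_cases j
    · exact Reachable.refl _
    · exact R01 hi hj
    · exact R02 hi hj
    · exact (R30 hj hi).symm
    · exact (R01 hj hi).symm
    · exact Reachable.refl _
    · exact R12 hi hj
    · exact R13 hi hj
    · exact (R02 hj hi).symm
    · exact (R12 hj hi).symm
    · exact Reachable.refl _
    · exact R23 hi hj
    · exact R30 hi hj
    · exact (R13 hj hi).symm
    · exact (R23 hj hi).symm
    · exact Reachable.refl _
  -- transfer from the edge-deleted induced graph on V
  set F : Set (Sym2 ↥(Svᶜ : Set V)) :=
    {e | Sym2.map Subtype.val e = s(u, v) ∨ Sym2.map Subtype.val e = s(x, y)} with hFdef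
  set K' := (G.induce Svᶜ).deleteEdges F with hK'def
  have mapK : ∀ {c d : V} (hc : c ∈ (Svᶜ : Set V)) (hd : d ∈ (Svᶜ : Set V)),
      K'.Reachable ⟨c, hc⟩ ⟨d, hd⟩ →
      (Q.induce Sᶜ).Reachable ⟨inl c, hc⟩ ⟨inl d, hd⟩ := by
    intro c d hc hd hr
    have hmr : ∀ {z w : ↥(Svᶜ : Set V)}, K'.Adj z w →
        (Q.induce Sᶜ).Adj ⟨inl z.val, z.property⟩ ⟨inl w.val, w.property⟩ := by
      rintro ⟨z, hz⟩ ⟨w, hw⟩ hadj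
      rw [hK'def, deleteEdges_adj] at hadj
      obtain ⟨hGadj, hnF⟩ := hadj
      have hGzw : G.Adj z w := hGadj
      refine hQadj hGzw ?_ ?_
      · intro h; exact hnF (by rw [hFdef]; left; rw [Sym2.map_pair_eq]; exact h)
      · intro h; exact hnF (by rw [hFdef]; right; rw [Sym2.map_pair_eq]; exact h)
    exact Reachable.map (G' := Q.induce Sᶜ) ⟨fun z => ⟨inl z.val, z.property⟩, hmr⟩ hr
  -- transfer from induced subgraphs of G avoiding a small set T
  have mapT : ∀ (T : Set V), T.ncard ≤ 2 →
      (∀ c d : V, c ∉ T → d ∉ T → s(c, d) ≠ s(u, v) ∧ s(c, d) ≠ s(x, y)) →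
      (∀ e : V, e ∉ T → (inl e : V ⊕ Fin 4) ∈ Sᶜ) →
      ∀ {c d : V} (hc : c ∉ T) (hd : d ∉ T)
        (hcS : (inl c : V ⊕ Fin 4) ∈ Sᶜ) (hdS : (inl d : V ⊕ Fin 4) ∈ Sᶜ),
      (Q.induce Sᶜ).Reachable ⟨inl c, hcS⟩ ⟨inl d, hdS⟩ := by
    intro T hT2 hedge hTS c d hc hd hcS hdS
    have hconn := h3.2 T hT2
    have hr := hconn ⟨c, hc⟩ ⟨d, hd⟩
    have hmr : ∀ {z w : ↥(Tᶜ : Set V)}, (G.induce Tᶜ).Adj z w →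
        (Q.induce Sᶜ).Adj ⟨inl z.val, hTS _ z.property⟩ ⟨inl w.val, hTS _ w.property⟩ := by
      rintro ⟨z, hz⟩ ⟨w, hw⟩ hadj
      have hGzw : G.Adj z w := hadj
      exact hQadj hGzw (hedge z w hz hw).1 (hedge z w hz hw).2
    exact Reachable.map (G' := Q.induce Sᶜ) ⟨fun z => ⟨inl z.val, hTS _ z.property⟩, hmr⟩ hr
  -- all anchors are mutually reachable when no V-vertex is removed
  have anchors_all : (∀ b : V, (inl b : V ⊕ Fin 4) ∈ Sᶜ) →
      ∀ p : V, (p = u ∨ p = v ∨ p = x ∨ p = y) →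
      ∀ (hp : (inl p : V ⊕ Fin 4) ∈ Sᶜ) (hu' : (inl u : V ⊕ Fin 4) ∈ Sᶜ),
      (Q.induce Sᶜ).Reachable ⟨inl p, hp⟩ ⟨inl u, hu'⟩ := by
    intro hall p hpd hp hu'
    have hpair2 : ∀ z : V, ({z} : Set V).ncard ≤ 2 := by
      intro z; simp [Set.ncard_singleton]
    have hpairc : ∀ z w : V, ({z, w} : Set V).ncard ≤ 2 := by
      intro z w
      exact (Set.ncard_insert_le _ _).trans (by simp [Set.ncard_singleton])
    have notmem : ∀ c z w : V, c ≠ z → c ≠ w → c ∉ ({z, w} : Set V) := by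
      intro c z w h1 h2
      simp [h1, h2]
    -- u ↔ x
    have rux : (Q.induce Sᶜ).Reachable ⟨inl u, hall u⟩ ⟨inl x, hall x⟩ := by
      refine mapT {v, y} (hpairc _ _) ?_ (fun e _ => hall e)
        (notmem _ _ _ huv huy) (notmem _ _ _ (Ne.symm hvx) hxy) _ _
      intro c d hc hd
      simp only [Set.mem_insert_iff, Set.mem_singleton_iff, not_or] at hc hd
      constructor
      · intro h
        rcases Sym2.eq_iff.mp h with ⟨_, h2⟩ | ⟨h1, _⟩
        · exact hd.1 h2
        · exact hc.1 h1
      · intro h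
        rcases Sym2.eq_iff.mp h with ⟨_, h2⟩ | ⟨h1, _⟩
        · exact hd.2 h2
        · exact hc.2 h1
    -- v ↔ y
    have rvy : (Q.induce Sᶜ).Reachable ⟨inl v, hall v⟩ ⟨inl y, hall y⟩ := by
      refine mapT {u, x} (hpairc _ _) ?_ (fun e _ => hall e)
        (notmem _ _ _ (Ne.symm huv) hvx) (notmem _ _ _ (Ne.symm huy) (Ne.symm hxy)) _ _
      intro c d hc hd
      simp only [Set.mem_insert_iff, Set.mem_singleton_iff, not_or] at hc hd
      constructor
      · intro h
        rcases Sym2.eq_iff.mp h with ⟨h1, _⟩ | ⟨_, h2⟩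
        · exact hc.1 h1
        · exact hd.1 h2
      · intro h
        rcases Sym2.eq_iff.mp h with ⟨h1, _⟩ | ⟨_, h2⟩
        · exact hc.2 h1
        · exact hd.2 h2
    -- u ↔ v
    have ruv : (Q.induce Sᶜ).Reachable ⟨inl u, hall u⟩ ⟨inl v, hall v⟩ := by
      by_cases hux : u = x
      · -- deleted edges are uv and uy
        obtain ⟨n, hadjn, hnv, hny⟩ := aux_mindeg hcard h3 u v y
        have s1 : Q.Adj (inl u) (inl n) := by
          refine hQadj hadjn ?_ ?_
          · intro h
            rcases Sym2.eq_iff.mp h with ⟨_, h2⟩ | ⟨h1, _⟩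
            · exact hnv h2
            · exact huv h1
          · intro h
            rcases Sym2.eq_iff.mp h with ⟨h1, h2⟩ | ⟨h1, _⟩
            · exact hny h2
            · exact huy h1
        have s2 : (Q.induce Sᶜ).Reachable ⟨inl n, hall n⟩ ⟨inl v, hall v⟩ := by
          refine mapT {u} (hpair2 _) ?_ (fun e _ => hall e)
            (by simp [hadjn.ne']) (by simp [Ne.symm huv]) _ _
          intro c d hc hd
          simp only [Set.mem_singleton_iff] at hc hd
          constructor
          · intro h
            rcases Sym2.eq_iff.mp h with ⟨h1, _⟩ | ⟨_, h2⟩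
            · exact hc h1
            · exact hd h2
          · intro h
            rcases Sym2.eq_iff.mp h with ⟨h1, _⟩ | ⟨_, h2⟩
            · exact hc (h1.trans hux.symm)
            · exact hd (h2.trans hux.symm)
        exact (hstepG (hall u) (hall n) s1).trans s2
      · by_cases hvy : v = y
        · -- deleted edges are uv and xv
          obtain ⟨n, hadjn, hnu, hnx⟩ := aux_mindeg hcard h3 v u x
          have s1 : Q.Adj (inl v) (inl n) := by
            refine hQadj hadjn ?_ ?_
            · intro h
              rcases Sym2.eq_iff.mp h with ⟨h1, _⟩ | ⟨_, h2⟩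
              · exact huv h1.symm
              · exact hnu h2
            · intro h
              rcases Sym2.eq_iff.mp h with ⟨h1, _⟩ | ⟨_, h2⟩
              · exact hvx h1
              · exact hnx h2
          have s2 : (Q.induce Sᶜ).Reachable ⟨inl n, hall n⟩ ⟨inl u, hall u⟩ := by
            refine mapT {v} (hpair2 _) ?_ (fun e _ => hall e)
              (by simp [hadjn.ne']) (by simp [huv]) _ _
            intro c d hc hd
            simp only [Set.mem_singleton_iff] at hc hd
            constructor
            · intro h
              rcases Sym2.eq_iff.mp h with ⟨_, h2⟩ | ⟨h1, _⟩
              · exact hd h2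
              · exact hc h1
            · intro h
              rcases Sym2.eq_iff.mp h with ⟨_, h2⟩ | ⟨h1, _⟩
              · exact hd (h2.trans hvy.symm)
              · exact hc (h1.trans hvy.symm)
          exact ((hstepG (hall v) (hall n) s1).trans s2).symm
        · -- u ↔ y through Vᶜ{v,x}
          have ruy : (Q.induce Sᶜ).Reachable ⟨inl u, hall u⟩ ⟨inl y, hall y⟩ := by
            refine mapT {v, x} (hpairc _ _) ?_ (fun e _ => hall e)
              (notmem _ _ _ huv hux) (notmem _ _ _ (fun h => hvy h.symm) (Ne.symm hxy)) _ _
            intro c d hc hd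
            simp only [Set.mem_insert_iff, Set.mem_singleton_iff, not_or] at hc hd
            constructor
            · intro h
              rcases Sym2.eq_iff.mp h with ⟨_, h2⟩ | ⟨h1, _⟩
              · exact hd.1 h2
              · exact hc.1 h1
            · intro h
              rcases Sym2.eq_iff.mp h with ⟨h1, _⟩ | ⟨_, h2⟩
              · exact hc.2 h1
              · exact hd.2 h2
          exact ruy.trans rvy.symm
    rcases hpd with rfl | rfl | rfl | rfl
    · exact Reachable.refl _
    · exact ruv.symm
    · exact rux.symm
    · exact (ruv.trans rvy).symm
  -- there exists a good pair: a surviving anchor with surviving ring vertex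
  have hgood : ∃ (p : V) (i : Fin 4), ∃ (hp : (inl p : V ⊕ Fin 4) ∈ Sᶜ)
      (hi : (inr i : V ⊕ Fin 4) ∈ Sᶜ), Q.Adj (inl p) (inr i) ∧
      (p = u ∨ p = v ∨ p = x ∨ p = y) := by
    by_cases hu0 : (inl u : V ⊕ Fin 4) ∈ S
    · by_cases hv0 : (inl v : V ⊕ Fin 4) ∈ S
      · have hSset := hpair _ _ (by simp [huv]) hu0 hv0
        by_cases hxu : x = u
        · have hvy : v ≠ y := by
            intro h
            exact hne (by rw [hxu, ← h])
          refine ⟨y, 2, ?_, ?_, hadjY, Or.inr (Or.inr (Or.inr rfl))⟩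
          · intro hy
            rcases hSset _ hy with h | h
            · exact huy (inl_injective h).symm
            · exact hvy (inl_injective h).symm
          · intro h2
            rcases hSset _ h2 with h | h <;> simp at h
        · refine ⟨x, 3, ?_, ?_, hadjX, Or.inr (Or.inr (Or.inl rfl))⟩
          · intro hx
            rcases hSset _ hx with h | h
            · exact hxu (inl_injective h)
            · exact hvx (inl_injective h).symm
          · intro h3'
            rcases hSset _ h3' with h | h <;> simp at h
      · by_cases hr1 : (inr 1 : V ⊕ Fin 4) ∈ S
        · have hSset := hpair _ _ (by simp) hu0 hr1
          refine ⟨y, 2, ?_, ?_, hadjY, Or.inr (Or.inr (Or.inr rfl))⟩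
          · intro hy
            rcases hSset _ hy with h | h
            · exact huy (inl_injective h).symm
            · simp at h
          · intro h2
            rcases hSset _ h2 with h | h
            · simp at h
            · exact absurd (inr_injective h) (by decide)
        · exact ⟨v, 1, hv0, hr1, hadjV, Or.inr (Or.inl rfl)⟩
    · by_cases hr0 : (inr 0 : V ⊕ Fin 4) ∈ S
      · by_cases hv0 : (inl v : V ⊕ Fin 4) ∈ S
        · have hSset := hpair _ _ (by simp) hr0 hv0
          refine ⟨x, 3, ?_, ?_, hadjX, Or.inr (Or.inr (Or.inl rfl))⟩
          · intro hx
            rcases hSset _ hx with h | h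
            · simp at h
            · exact hvx (inl_injective h).symm
          · intro h3'
            rcases hSset _ h3' with h | h
            · exact absurd (inr_injective h) (by decide)
            · simp at h
        · by_cases hr1 : (inr 1 : V ⊕ Fin 4) ∈ S
          · have hSset := hpair _ _ (by simp) hr0 hr1
            refine ⟨y, 2, ?_, ?_, hadjY, Or.inr (Or.inr (Or.inr rfl))⟩
            · intro hy
              rcases hSset _ hy with h | h <;> simp at h
            · intro h2
              rcases hSset _ h2 with h | h
              · exact absurd (inr_injective h) (by decide)
              · exact absurd (inr_injective h) (by decide)
          · exact ⟨v, 1, hv0, hr1, hadjV, Or.inr (Or.inl rfl)⟩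
      · exact ⟨u, 0, hu0, hr0, hadjU, Or.inl rfl⟩
  obtain ⟨pstar, istar, hpstar, histar, hadjstar, hpstard⟩ := hgood
  -- every surviving anchor reaches pstar
  have hanchor : ∀ q : V, (q = u ∨ q = v ∨ q = x ∨ q = y) →
      ∀ (hqS : (inl q : V ⊕ Fin 4) ∈ Sᶜ),
      (Q.induce Sᶜ).Reachable ⟨inl q, hqS⟩ ⟨inl pstar, hpstar⟩ := by
    intro q hqd hqS
    by_cases hSv0 : ∀ b : V, (inl b : V ⊕ Fin 4) ∈ Sᶜ
    · exact (anchors_all hSv0 q hqd hqS (hSv0 u)).trans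
        (anchors_all hSv0 pstar hpstard hpstar (hSv0 u)).symm
    · push_neg at hSv0
      obtain ⟨w0, hw0⟩ := hSv0
      have hw0' : (inl w0 : V ⊕ Fin 4) ∈ S := by simpa using hw0
      have hone : ∀ i j : Fin 4, (inr i : V ⊕ Fin 4) ∈ S → (inr j : V ⊕ Fin 4) ∈ S → i = j := by
        intro i j hi hj
        by_contra hij
        rcases hpair (inr i) (inr j) (by simpa using hij) hi hj (inl w0) hw0' with h | h <;>
          simp at h
      have hq' : q ∈ (Svᶜ : Set V) := hqS
      have hp' : pstar ∈ (Svᶜ : Set V) := hpstar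
      have hFiff : ∀ e : Sym2 ↥(Svᶜ : Set V), e ∈ F ↔
          Sym2.map Subtype.val e = s(u, v) ∨ Sym2.map Subtype.val e = s(x, y) := by
        intro e; rw [hFdef]; simp only [Set.mem_setOf_eq]
      have hFiff' : ∀ e : Sym2 ↥(Svᶜ : Set V), e ∈ F ↔
          Sym2.map Subtype.val e = s(x, y) ∨ Sym2.map Subtype.val e = s(u, v) := by
        intro e; rw [hFdef]; simp only [Set.mem_setOf_eq]; tauto
      -- a generic route through a surviving attach pair
      have route : ∀ (z : V) (hzW : z ∈ (Svᶜ : Set V)) (j : Fin 4),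
          Q.Adj (inl z) (inr j) → ∀ (hjS : (inr j : V ⊕ Fin 4) ∈ Sᶜ),
          K'.Reachable ⟨q, hq'⟩ ⟨z, hzW⟩ →
          (Q.induce Sᶜ).Reachable ⟨inl q, hqS⟩ ⟨inl pstar, hpstar⟩ := by
        intro z hzW j hadjz hjS hrz
        exact (mapK _ _ hrz).trans ((hstepG _ hjS hadjz).trans
          ((ring_reach hone j istar hjS histar).trans (hstepG hpstar histar hadjstar).symm))
      rcases hqd with h | h | h | h
      · -- q = u, ring index 0
        replace h := h.symm; subst h
        by_cases hrq : (inr 0 : V ⊕ Fin 4) ∈ S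
        · by_cases hnr : K'.Reachable ⟨u, hq'⟩ ⟨pstar, hp'⟩
          · exact mapK _ _ hnr
          · obtain ⟨z, hzd, hzW, hrz⟩ := aux_cross hcard h3 x y u v huv Sv
              (hSv1 0 hrq) F hFiff' hq' hp' hnr
            have hdead : ∀ j : Fin 4, j ≠ 0 → (inr j : V ⊕ Fin 4) ∈ Sᶜ :=
              fun j hj hmem => hj (hone j 0 hmem hrq)
            rcases hzd with rfl | rfl
            · exact route _ hzW 3 hadjX (hdead 3 (by decide)) hrz
            · exact route _ hzW 2 hadjY (hdead 2 (by decide)) hrz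
        · exact (hstepG hqS hrq hadjU).trans
            ((ring_reach hone 0 istar hrq histar).trans (hstepG hpstar histar hadjstar).symm)
      · -- q = v, ring index 1
        replace h := h.symm; subst h
        by_cases hrq : (inr 1 : V ⊕ Fin 4) ∈ S
        · by_cases hnr : K'.Reachable ⟨v, hq'⟩ ⟨pstar, hp'⟩
          · exact mapK _ _ hnr
          · obtain ⟨z, hzd, hzW, hrz⟩ := aux_cross hcard h3 x y u v huv Sv
              (hSv1 1 hrq) F hFiff' hq' hp' hnr
            have hdead : ∀ j : Fin 4, j ≠ 1 → (inr j : V ⊕ Fin 4) ∈ Sᶜ :=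
              fun j hj hmem => hj (hone j 1 hmem hrq)
            rcases hzd with rfl | rfl
            · exact route _ hzW 3 hadjX (hdead 3 (by decide)) hrz
            · exact route _ hzW 2 hadjY (hdead 2 (by decide)) hrz
        · exact (hstepG hqS hrq hadjV).trans
            ((ring_reach hone 1 istar hrq histar).trans (hstepG hpstar histar hadjstar).symm)
      · -- q = x, ring index 3
        replace h := h.symm; subst h
        by_cases hrq : (inr 3 : V ⊕ Fin 4) ∈ S
        · by_cases hnr : K'.Reachable ⟨x, hq'⟩ ⟨pstar, hp'⟩
          · exact mapK _ _ hnr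
          · obtain ⟨z, hzd, hzW, hrz⟩ := aux_cross hcard h3 u v x y hxy Sv
              (hSv1 3 hrq) F hFiff hq' hp' hnr
            have hdead : ∀ j : Fin 4, j ≠ 3 → (inr j : V ⊕ Fin 4) ∈ Sᶜ :=
              fun j hj hmem => hj (hone j 3 hmem hrq)
            rcases hzd with rfl | rfl
            · exact route _ hzW 0 hadjU (hdead 0 (by decide)) hrz
            · exact route _ hzW 1 hadjV (hdead 1 (by decide)) hrz
        · exact (hstepG hqS hrq hadjX).trans
            ((ring_reach hone 3 istar hrq histar).trans (hstepG hpstar histar hadjstar).symm)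
      · -- q = y, ring index 2
        replace h := h.symm; subst h
        by_cases hrq : (inr 2 : V ⊕ Fin 4) ∈ S
        · by_cases hnr : K'.Reachable ⟨y, hq'⟩ ⟨pstar, hp'⟩
          · exact mapK _ _ hnr
          · obtain ⟨z, hzd, hzW, hrz⟩ := aux_cross hcard h3 u v x y hxy Sv
              (hSv1 2 hrq) F hFiff hq' hp' hnr
            have hdead : ∀ j : Fin 4, j ≠ 2 → (inr j : V ⊕ Fin 4) ∈ Sᶜ :=
              fun j hj hmem => hj (hone j 2 hmem hrq)
            rcases hzd with rfl | rfl
            · exact route _ hzW 0 hadjU (hdead 0 (by decide)) hrz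
            · exact route _ hzW 1 hadjV (hdead 1 (by decide)) hrz
        · exact (hstepG hqS hrq hadjY).trans
            ((ring_reach hone 2 istar hrq histar).trans (hstepG hpstar histar hadjstar).symm)
  -- every surviving V-vertex reaches pstar
  have hVreach : ∀ (a : V) (ha : (inl a : V ⊕ Fin 4) ∈ Sᶜ),
      (Q.induce Sᶜ).Reachable ⟨inl a, ha⟩ ⟨inl pstar, hpstar⟩ := by
    intro a ha
    have ha' : a ∈ (Svᶜ : Set V) := ha
    have hp' : pstar ∈ (Svᶜ : Set V) := hpstar
    obtain ⟨w⟩ := (h3.2 Sv hSv2) ⟨a, ha'⟩ ⟨pstar, hp'⟩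
    obtain ⟨p', hr, ho⟩ := aux_reach_or_endpoint F w
    rcases ho with rfl | ⟨e, heF, hpe⟩
    · exact mapK _ _ hr
    · have hmem : (p' : V) ∈ Sym2.map Subtype.val e := Sym2.mem_map.mpr ⟨p', hpe, rfl⟩
      have heF' : Sym2.map Subtype.val e = s(u, v) ∨ Sym2.map Subtype.val e = s(x, y) := by
        rw [hFdef] at heF; exact heF
      have hd : p'.val = u ∨ p'.val = v ∨ p'.val = x ∨ p'.val = y := by
        rcases heF' with h | h
        · rw [h] at hmem
          rcases Sym2.mem_iff.mp hmem with h' | h' <;> tauto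
        · rw [h] at hmem
          rcases Sym2.mem_iff.mp hmem with h' | h' <;> tauto
      have hr' : K'.Reachable ⟨a, ha'⟩ ⟨p'.val, p'.property⟩ := hr
      exact (mapK _ _ hr').trans (hanchor p'.val hd p'.property)
  -- every surviving ring vertex reaches pstar
  have hRreach : ∀ (j : Fin 4) (hj : (inr j : V ⊕ Fin 4) ∈ Sᶜ),
      (Q.induce Sᶜ).Reachable ⟨inr j, hj⟩ ⟨inl pstar, hpstar⟩ := by
    intro j hj
    by_cases hone : ∀ i j' : Fin 4, (inr i : V ⊕ Fin 4) ∈ S → (inr j' : V ⊕ Fin 4) ∈ S → i = j'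
    · exact (ring_reach hone j istar hj histar).trans (hstepG hpstar histar hadjstar).symm
    · push_neg at hone
      obtain ⟨i₁, i₂, h1, h2, h12⟩ := hone
      have hSv0 : ∀ b : V, (inl b : V ⊕ Fin 4) ∈ Sᶜ := by
        intro b hb
        rcases hpair _ _ (by simpa using h12) h1 h2 (inl b) hb with h | h <;> simp at h
      rcases (by decide : ∀ jj : Fin 4, jj = 0 ∨ jj = 1 ∨ jj = 2 ∨ jj = 3) j with
        rfl | rfl | rfl | rfl
      · exact (hstepG hj (hSv0 u) hadjU.symm).trans (hanchor u (Or.inl rfl) (hSv0 u))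
      · exact (hstepG hj (hSv0 v) hadjV.symm).trans (hanchor v (Or.inr (Or.inl rfl)) (hSv0 v))
      · exact (hstepG hj (hSv0 y) hadjY.symm).trans
          (hanchor y (Or.inr (Or.inr (Or.inr rfl))) (hSv0 y))
      · exact (hstepG hj (hSv0 x) hadjX.symm).trans
          (hanchor x (Or.inr (Or.inr (Or.inl rfl))) (hSv0 x))
  rw [connected_iff]
  constructor
  · rintro ⟨z, hz⟩ ⟨w, hw⟩
    have r1 : (Q.induce Sᶜ).Reachable ⟨z, hz⟩ ⟨inl pstar, hpstar⟩ := by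
      cases z with
      | inl a => exact hVreach a hz
      | inr j => exact hRreach j hz
    have r2 : (Q.induce Sᶜ).Reachable ⟨w, hw⟩ ⟨inl pstar, hpstar⟩ := by
      cases w with
      | inl a => exact hVreach a hw
      | inr j => exact hRreach j hw
    exact r1.trans r2.symm
  · exact ⟨⟨inl pstar, hpstar⟩⟩
end
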